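/- Assume τX = X. Let A --f--> X₀ --g--> B → A⟦1⟧ be a distinguished triangle with X₀ an object of X. If f is a left X-approximation of A, then g is a right X-approximation of B. Dually, if g is a right X-approximation of B, then f is a left X-approximation of A. -/

import Mathlib

/-!
Common definitions: the ideal of morphisms factoring through a subcategory `X`
(given as a set of objects of `C`), `X`-monic and `X`-epic morphisms, left and
right `X`-approximations, additive subcategories closed under isomorphisms,
direct sums and direct summands, and the additive quotient category `C/X`
(realized via `CategoryTheory.Quotient` of the relation `xRel X`).
-/

open CategoryTheory Category Limits Pretriangulated

universe v u

namespace PaperStmt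

variable {C : Type u} [Category.{v} C]

/-- `f` factors through an object of `X`. -/
def FactorsThru (X : Set C) {A B : C} (f : A ⟶ B) : Prop :=
  ∃ (M : C) (g : A ⟶ M) (h : M ⟶ B), M ∈ X ∧ g ≫ h = f

/-- `f : A ⟶ B` is `X`-monic: the map `Hom(B, X') → Hom(A, X')`, `g ↦ g ∘ f`,
is surjective for every object `X'` of `X`. -/
def IsXMonic (X : Set C) {A B : C} (f : A ⟶ B) : Prop :=
  ∀ ⦃X' : C⦄, X' ∈ X → ∀ g : A ⟶ X', ∃ h : B ⟶ X', f ≫ h = g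

/-- `f : A ⟶ B` is `X`-epic: the map `Hom(X', A) → Hom(X', B)`, `g ↦ f ∘ g`,
is surjective for every object `X'` of `X`. -/
def IsXEpic (X : Set C) {A B : C} (f : A ⟶ B) : Prop :=
  ∀ ⦃X' : C⦄, X' ∈ X → ∀ g : X' ⟶ B, ∃ h : X' ⟶ A, h ≫ f = g

/-- `α : A ⟶ X₀` is a left `X`-approximation of `A`: `X₀` lies in `X` and every
morphism from `A` to an object of `X` factors through `α`. -/
def IsLeftApprox (X : Set C) {A X₀ : C} (α : A ⟶ X₀) : Prop :=
  X₀ ∈ X ∧ IsXMonic X α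

/-- `β : X₀ ⟶ B` is a right `X`-approximation of `B`: `X₀` lies in `X` and every
morphism from an object of `X` to `B` factors through `β`. -/
def IsRightApprox (X : Set C) {X₀ B : C} (β : X₀ ⟶ B) : Prop :=
  X₀ ∈ X ∧ IsXEpic X β

/-- `X` is (the object class of) a full additive subcategory of `C`, closed
under isomorphisms, finite direct sums and direct summands. -/
structure IsAdditiveClosedSubcat [Preadditive C] [HasBinaryBiproducts C] (X : Set C) :
    Prop where
  zero_mem : ∀ Z : C, IsZero Z → Z ∈ X
  iso_closed : ∀ {A B : C}, (A ≅ B) → A ∈ X → B ∈ X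
  sum_closed : ∀ {A B : C}, A ∈ X → B ∈ X → (A ⊞ B) ∈ X
  summand_closed : ∀ {A B : C}, (A ⊞ B) ∈ X → A ∈ X

/-- Two morphisms are identified in the quotient category `C/X` precisely when
their difference factors through an object of `X`. -/
def xRel [Preadditive C] (X : Set C) : HomRel C :=
  fun _ _ f g => FactorsThru X (f - g)

/-- in a `k`-linear Hom-finite triangulated category with
Auslander–Reiten (Serre) duality `Hom(A, B⟦1⟧) ≅ D Hom(B, τA)` and `τX = X`:
for a distinguished triangle `A --f--> X₀ --g--> B → A⟦1⟧` with `X₀ ∈ X`, if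
`f` is a left `X`-approximation of `A`, then `g` is a right `X`-approximation
of `B`, and conversely. -/
theorem statement10 [Preadditive C] [HasZeroObject C] [HasShift C ℤ]
    [∀ n : ℤ, (shiftFunctor C n).Additive] [Pretriangulated C] [HasBinaryBiproducts C]
    (k : Type*) [Field k] [CategoryTheory.Linear k C]
    [∀ A B : C, FiniteDimensional k (A ⟶ B)]
    (τ : C ⥤ C) [τ.Additive] [τ.IsEquivalence]
    (e : ∀ A B : C, (A ⟶ (B⟦(1 : ℤ)⟧)) ≃ₗ[k] ((B ⟶ τ.obj A) →ₗ[k] k))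
    (he₁ : ∀ {A' A B : C} (f : A' ⟶ A) (φ : A ⟶ (B⟦(1 : ℤ)⟧)) (g : B ⟶ τ.obj A'),
      e A' B (f ≫ φ) g = e A B φ (g ≫ τ.map f))
    (he₂ : ∀ {A B B' : C} (h : B ⟶ B') (φ : A ⟶ (B⟦(1 : ℤ)⟧)) (g : B' ⟶ τ.obj A),
      e A B' (φ ≫ (h⟦(1 : ℤ)⟧')) g = e A B φ (h ≫ g))
    (X : Set C) (hX : IsAdditiveClosedSubcat X)
    (hτ₁ : ∀ X' ∈ X, τ.obj X' ∈ X)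
    (hτ₂ : ∀ X' ∈ X, ∃ Y ∈ X, Nonempty (τ.obj Y ≅ X'))
    {A X₀ B : C} (f : A ⟶ X₀) (g : X₀ ⟶ B) (δ : B ⟶ (A⟦(1 : ℤ)⟧))
    (hX₀ : X₀ ∈ X)
    (hT : Triangle.mk f g δ ∈ distTriang C) :
    (IsLeftApprox X f → IsRightApprox X g) ∧ (IsRightApprox X g → IsLeftApprox X f) := by
  constructor
  · rintro ⟨-, hf⟩
    refine ⟨hX₀, ?_⟩
    intro X' hX' u
    -- show u ≫ δ = 0
    have hzero : u ≫ δ = 0 := by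
      rw [← (e X' A).map_eq_zero_iff]
      apply LinearMap.ext
      intro ψ
      obtain ⟨χ, hχ⟩ := hf (hτ₁ X' hX') ψ
      rw [← hχ, ← he₂ f (u ≫ δ) χ]
      have : (u ≫ δ) ≫ (f⟦(1:ℤ)⟧') = 0 := by
        rw [assoc]
        have := comp_distTriang_mor_zero₃₁ _ hT
        change δ ≫ f⟦(1:ℤ)⟧' = 0 at this
        rw [this, comp_zero]
      rw [this, map_zero]
      rfl
    obtain ⟨h, hh⟩ := Triangle.coyoneda_exact₃ _ hT u hzero
    exact ⟨h, hh.symm⟩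
  · rintro ⟨-, hg⟩
    refine ⟨hX₀, ?_⟩
    intro X' hX' φ
    have hzero : δ ≫ (φ⟦(1:ℤ)⟧') = 0 := by
      rw [← (e B X').map_eq_zero_iff]
      apply LinearMap.ext
      intro g'
      obtain ⟨Y, hY, ⟨i⟩⟩ := hτ₂ X' hX'
      obtain ⟨h'', hh''⟩ := τ.map_surjective (i.hom ≫ g')
      have hg' : g' = i.inv ≫ τ.map h'' := by rw [hh'']; simp
      obtain ⟨w, hw⟩ := hg hY h''
      have key : (e B X') (δ ≫ (φ⟦(1:ℤ)⟧')) g' = (e B A) δ (φ ≫ g') := he₂ φ δ g'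
      rw [key, hg', ← hw, τ.map_comp]
      have : φ ≫ i.inv ≫ τ.map w ≫ τ.map g = (φ ≫ i.inv ≫ τ.map w) ≫ τ.map g := by
        simp only [assoc]
      rw [this, ← he₁ g δ (φ ≫ i.inv ≫ τ.map w)]
      have hgd : g ≫ δ = 0 := comp_distTriang_mor_zero₂₃ _ hT
      rw [hgd, map_zero]
      rfl
    have hro : (φ⟦(1:ℤ)⟧') ≫ (𝟙 (X'⟦(1:ℤ)⟧)) = φ⟦(1:ℤ)⟧' := comp_id _
    obtain ⟨g', hg'⟩ : ∃ g' : X₀⟦(1:ℤ)⟧ ⟶ X'⟦(1:ℤ)⟧, φ⟦(1:ℤ)⟧' = (-f⟦(1:ℤ)⟧') ≫ g' :=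
      Triangle.yoneda_exact₃ _ (rot_of_distTriang _ hT) (φ⟦(1:ℤ)⟧')
      (by exact hzero)
    change φ⟦(1:ℤ)⟧' = (-f⟦(1:ℤ)⟧') ≫ g' at hg'
    refine ⟨(shiftFunctor C (1:ℤ)).preimage (-g'), ?_⟩
    apply (shiftFunctor C (1:ℤ)).map_injective
    rw [Functor.map_comp, Functor.map_preimage, hg']
    simp

end PaperStmt
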